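/- The map Φ₂(X) = X - M X Mᵀ with M = I - 𝟙𝟙ᵀ/n is the orthogonal projector of ℝ^{n×n} (with the Frobenius inner product ⟨X,Y⟩ = trace(YᵀX)) onto the subspace 𝒟 = {x𝟙ᵀ - 𝟙yᵀ : x,y ∈ ℝⁿ}: Φ₂(D) = D for D ∈ 𝒟, Φ₂(X) ∈ 𝒟 for all X, and ⟨X - Φ₂(X), D⟩ = 0 for all X and all D ∈ 𝒟. -/

import Mathlib

open Matrix BigOperators

def Delta {n : ℕ} (x y : Fin n → ℝ) : Matrix (Fin n) (Fin n) ℝ :=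
  Matrix.of fun i j => x i - y j

def Dset (n : ℕ) : Set (Matrix (Fin n) (Fin n) ℝ) :=
  { D | ∃ x y : Fin n → ℝ, D = Delta x y }

noncomputable def Pmat (n : ℕ) : Matrix (Fin n) (Fin n) ℝ :=
  1 - (n : ℝ)⁻¹ • Matrix.vecMulVec (fun _ => 1) (fun _ => 1)

lemma PXP_apply {n : ℕ} (X : Matrix (Fin n) (Fin n) ℝ) (i j : Fin n) :
    (Pmat n * X * (Pmat n)ᵀ) i j =
      X i j - (n:ℝ)⁻¹ * ∑ k, X k j - (n:ℝ)⁻¹ * ∑ k, X i k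
        + (n:ℝ)⁻¹ * ((n:ℝ)⁻¹ * ∑ k, ∑ l, X k l) := by
  simp [Pmat, Matrix.mul_apply, Matrix.sub_apply, Matrix.one_apply, vecMulVec_apply,
    Finset.sum_sub_distrib, sub_mul, mul_sub, Finset.mul_sum, Finset.sum_mul,
    Finset.sum_ite_eq, Finset.sum_ite_eq']
  ring_nf
  congr 1
  · exact Finset.sum_comm

lemma PXP_rowsum {n : ℕ} (hn : 0 < n) (X : Matrix (Fin n) (Fin n) ℝ) (i : Fin n) :
    ∑ j, (Pmat n * X * (Pmat n)ᵀ) i j = 0 := by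
  have hn' : (n:ℝ) ≠ 0 := Nat.cast_ne_zero.mpr hn.ne'
  simp only [PXP_apply, Finset.sum_add_distrib, Finset.sum_sub_distrib, Finset.sum_const,
    Finset.card_univ, Fintype.card_fin, nsmul_eq_mul, ← Finset.mul_sum]
  rw [Finset.sum_comm]
  field_simp
  ring

lemma PXP_colsum {n : ℕ} (hn : 0 < n) (X : Matrix (Fin n) (Fin n) ℝ) (j : Fin n) :
    ∑ i, (Pmat n * X * (Pmat n)ᵀ) i j = 0 := by
  have hn' : (n:ℝ) ≠ 0 := Nat.cast_ne_zero.mpr hn.ne'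
  simp only [PXP_apply, Finset.sum_add_distrib, Finset.sum_sub_distrib, Finset.sum_const,
    Finset.card_univ, Fintype.card_fin, nsmul_eq_mul, ← Finset.mul_sum]
  field_simp
  ring

theorem stmt9 {n : ℕ} (hn : 0 < n) :
    (∀ D ∈ Dset n, D - Pmat n * D * (Pmat n)ᵀ = D) ∧
    (∀ X : Matrix (Fin n) (Fin n) ℝ, X - Pmat n * X * (Pmat n)ᵀ ∈ Dset n) ∧
    (∀ X : Matrix (Fin n) (Fin n) ℝ, ∀ D ∈ Dset n,
      Matrix.trace (Dᵀ * (X - (X - Pmat n * X * (Pmat n)ᵀ))) = 0) := by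
  have hn' : (n:ℝ) ≠ 0 := Nat.cast_ne_zero.mpr hn.ne'
  refine ⟨?_, ?_, ?_⟩
  · rintro D ⟨x, y, rfl⟩
    have h0 : Pmat n * Delta x y * (Pmat n)ᵀ = 0 := by
      ext i j
      simp only [PXP_apply, Delta, Matrix.of_apply, Matrix.zero_apply,
        Finset.sum_sub_distrib, Finset.sum_const, Finset.card_univ, Fintype.card_fin,
        nsmul_eq_mul]
      field_simp
      rw [← Finset.mul_sum]
      ring
    rw [h0, sub_zero]
  · intro X
    refine ⟨fun i => (n:ℝ)⁻¹ * ∑ k, X i k,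
      fun j => (n:ℝ)⁻¹ * ((n:ℝ)⁻¹ * ∑ k, ∑ l, X k l) - (n:ℝ)⁻¹ * ∑ k, X k j, ?_⟩
    ext i j
    simp only [Matrix.sub_apply, PXP_apply, Delta, Matrix.of_apply]
    ring
  · rintro X D ⟨x, y, rfl⟩
    rw [sub_sub_cancel]
    set M := Pmat n * X * (Pmat n)ᵀ with hM
    rw [Matrix.trace]
    simp only [Matrix.diag_apply, Matrix.mul_apply, Matrix.transpose_apply, Delta,
      Matrix.of_apply, sub_mul]
    rw [Finset.sum_comm]
    simp only [Finset.sum_sub_distrib]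
    have h1 : ∀ k, ∑ j, x k * M k j = 0 := by
      intro k; rw [← Finset.mul_sum, hM, PXP_rowsum hn, mul_zero]
    rw [Finset.sum_congr rfl (fun k _ => by rw [h1 k])]
    simp only [Finset.sum_const_zero, zero_sub, neg_eq_zero]
    rw [Finset.sum_comm]
    apply Finset.sum_eq_zero
    intro j _
    rw [← Finset.mul_sum, hM, PXP_colsum hn, mul_zero]
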